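/- arXiv:1602.05608 — 3 statements merged into one kernel-verified Lean document; each statement's English description precedes it below -/
import Mathlib

section
/- The biclique covering number of the complete graph K_n equals ⌈log₂ n⌉; that is, the edges of K_n can be covered by ⌈log₂ n⌉ complete bipartite subgraphs, and no fewer suffice (for the upper bound direction: ⌈log₂ n⌉ bicliques suffice). -/
/-- The biclique covering number of the complete graph `K_n` equals
`⌈log₂ n⌉`: its edges can be covered by `⌈log₂ n⌉` bicliques (complete bipartite
subgraphs, given by disjoint pairs of vertex sets), and no fewer bicliques suffice. -/
theorem stmt_0 (n : ℕ) (hn : 2 ≤ n) :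
    (∃ A B : Fin (Nat.clog 2 n) → Finset (Fin n),
      (∀ i, Disjoint (A i) (B i)) ∧
      (∀ u v : Fin n, u ≠ v →
        ∃ i, (u ∈ A i ∧ v ∈ B i) ∨ (u ∈ B i ∧ v ∈ A i))) ∧
    (∀ (q : ℕ) (A B : Fin q → Finset (Fin n)),
      (∀ i, Disjoint (A i) (B i)) →
      (∀ u v : Fin n, u ≠ v →
        ∃ i, (u ∈ A i ∧ v ∈ B i) ∨ (u ∈ B i ∧ v ∈ A i)) →
      Nat.clog 2 n ≤ q) := by
  constructor
  · set k := Nat.clog 2 n with hk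
    refine ⟨fun i => Finset.univ.filter (fun v => (v : ℕ).testBit i = true),
            fun i => Finset.univ.filter (fun v => (v : ℕ).testBit i = false),
            ?_, ?_⟩
    · intro i
      rw [Finset.disjoint_left]
      intro a ha hb
      simp only [Finset.mem_filter] at ha hb
      rw [ha.2] at hb
      exact Bool.true_eq_false.mp hb.2
    · intro u v huv
      have hn2 : n ≤ 2 ^ k := Nat.le_pow_clog (by norm_num) n
      have hne : (u : ℕ) ≠ (v : ℕ) := fun h => huv (Fin.ext h)
      by_contra hcon
      push_neg at hcon
      apply hne
      apply Nat.eq_of_testBit_eq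
      intro i
      by_cases hi : i < k
      · have := hcon ⟨i, hi⟩
        simp only [Finset.mem_filter, Finset.mem_univ, true_and] at this
        cases hu : (u : ℕ).testBit i <;> cases hv : (v : ℕ).testBit i <;> simp_all
      · push_neg at hi
        have h2 : 2 ^ k ≤ 2 ^ i := Nat.pow_le_pow_right (by norm_num) hi
        have hu : (u : ℕ) < 2 ^ i := lt_of_lt_of_le (lt_of_lt_of_le u.isLt hn2) h2
        have hv : (v : ℕ) < 2 ^ i := lt_of_lt_of_le (lt_of_lt_of_le v.isLt hn2) h2
        rw [Nat.testBit_lt_two_pow hu, Nat.testBit_lt_two_pow hv]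
  · intro q A B hdis hcov
    have hinj : Function.Injective (fun v : Fin n => (fun i : Fin q => decide (v ∈ A i))) := by
      intro u v huv
      by_contra hne
      obtain ⟨i, hi⟩ := hcov u v hne
      have heq : decide (u ∈ A i) = decide (v ∈ A i) := congrFun huv i
      rcases hi with ⟨hu, hv⟩ | ⟨hu, hv⟩
      · have : v ∈ A i := by
          have : decide (v ∈ A i) = true := by rw [← heq]; simpa using hu
          simpa using this
        exact (Finset.disjoint_left.mp (hdis i) this) hv
      · have : u ∈ A i := by
          have : decide (u ∈ A i) = true := by rw [heq]; simpa using hv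
          simpa using this
        exact (Finset.disjoint_left.mp (hdis i) this) hu
    have hcard : n ≤ 2 ^ q := by
      have := Fintype.card_le_of_injective _ hinj
      simpa using this
    exact (Nat.clog_le_iff_le_pow (by norm_num)).mpr hcard
end

section
/- Let G be a graph and S a set of vertex pairs such that every pair in S is connected in G by a path of length at most k. Then there exists a k-coloring of the edges of G that satisfies at least (k!/k^k)·|S| pairs from S (a pair is satisfied if it is joined by a rainbow path). -/
open Finset

/-- Counting lemma: the number of colorings `c : D → Fin k` making a fixed
nodup list `L` rainbow is at least `k.descFactorial L.length * k ^ (|D| - L.length)`. -/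
lemma aux_count_rainbow {D : Type*} [Fintype D] [DecidableEq D] (k : ℕ) (L : List D)
    (hL : L.Nodup) :
    k.descFactorial L.length * k ^ (Fintype.card D - L.length) ≤
      Fintype.card {c : D → Fin k // (L.map c).Nodup} := by
  classical
  set F : (Fin L.length ↪ Fin k) × ({x : D // x ∉ L} → Fin k) → (D → Fin k) :=
    fun gf x => if h : x ∈ L then gf.1 ⟨L.idxOf x, List.idxOf_lt_length_iff.2 h⟩ else gf.2 ⟨x, h⟩
    with hF
  have hFget : ∀ gf (i : Fin L.length), F gf (L.get i) = gf.1 i := by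
    intro gf i
    have h : L.get i ∈ L := L.get_mem _
    simp only [hF, dif_pos h]
    congr 1
    exact Fin.ext (List.get_idxOf hL i)
  have hFnot : ∀ gf (x : D) (h : x ∉ L), F gf x = gf.2 ⟨x, h⟩ := by
    intro gf x h
    simp only [hF, dif_neg h]
  have hnodup : ∀ gf, (L.map (F gf)).Nodup := by
    intro gf
    refine List.Nodup.map_on ?_ hL
    intro x hx y hy hxy
    simp only [hF, dif_pos hx, dif_pos hy] at hxy
    have := gf.1.injective hxy
    have h' : L.idxOf x = L.idxOf y := congrArg Fin.val this
    exact (List.idxOf_inj hx).1 h'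
  have hinj : Function.Injective
      (fun gf => (⟨F gf, hnodup gf⟩ : {c : D → Fin k // (L.map c).Nodup})) := by
    rintro ⟨g, f⟩ ⟨g', f'⟩ h
    have h' : F (g, f) = F (g', f') := congrArg Subtype.val h
    have hg : g = g' := by
      refine DFunLike.ext _ _ fun i => ?_
      have := congrFun h' (L.get i)
      rwa [hFget (g, f) i, hFget (g', f') i] at this
    have hf : f = f' := by
      funext x
      have := congrFun h' x.1
      rwa [hFnot (g, f) x.1 x.2, hFnot (g', f') x.1 x.2, Subtype.coe_eta] at this
    simp [hg, hf]
  have hcard := Fintype.card_le_of_injective _ hinj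
  have hdom : Fintype.card ((Fin L.length ↪ Fin k) × ({x : D // x ∉ L} → Fin k)) =
      k.descFactorial L.length * k ^ (Fintype.card D - L.length) := by
    have h1 : Fintype.card {x : D // x ∈ L} = L.length := by
      rw [Fintype.card_congr (Equiv.subtypeEquivRight (fun x => (List.mem_toFinset).symm)),
        Fintype.card_coe, List.toFinset_card_of_nodup hL]
    have h2 : Fintype.card {x : D // x ∉ L} = Fintype.card D - L.length := by
      rw [Fintype.card_subtype_compl, h1]
    rw [Fintype.card_prod, Fintype.card_embedding_eq, Fintype.card_fun, h2,
      Fintype.card_fin, Fintype.card_fin]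
  rw [← hdom]
  exact hcard

/-- The satisfaction predicate. -/
def auxSat {V : Type*} (G : SimpleGraph V) (k : ℕ) (c : G.edgeSet → Fin k)
    (e : Sym2 V) : Prop :=
  ∃ u v : V, e = s(u, v) ∧ ∃ p : G.Walk u v, p.IsPath ∧
    (p.edges.pmap (fun e' he' => c ⟨e', he'⟩)
      (fun _ he' => p.edges_subset_edgeSet he')).Nodup

/-- if every pair of `S` is connected in `G` by a path of length at
most `k`, then there is a `k`-edge-coloring of `G` satisfying at least
`(k!/k^k)·|S|` of the pairs in `S` (a pair is satisfied if it is joined by a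
rainbow path, i.e. a path whose edge colors are pairwise distinct). -/
theorem stmt_7 {V : Type*} [Fintype V] (G : SimpleGraph V) (k : ℕ) (hk : 2 ≤ k)
    (S : Finset (Sym2 V))
    (hS : ∀ u v : V, s(u, v) ∈ S → ∃ p : G.Walk u v, p.IsPath ∧ p.length ≤ k) :
    ∃ c : G.edgeSet → Fin k,
      ((Nat.factorial k : ℚ) / (k : ℚ) ^ k) * S.card ≤
        Nat.card {e : Sym2 V // e ∈ S ∧ ∃ u v : V, e = s(u, v) ∧
          ∃ p : G.Walk u v, p.IsPath ∧
            (p.edges.pmap (fun e' he' => c ⟨e', he'⟩)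
              (fun _ he' => p.edges_subset_edgeSet he')).Nodup} := by
  classical
  haveI : Fintype G.edgeSet := Fintype.ofFinite _
  haveI : Nonempty (Fin k) := ⟨⟨0, by omega⟩⟩
  set m := Fintype.card G.edgeSet with hm
  -- choose for each pair a short rainbow-candidate list of edges
  have hchoice : ∀ e : Sym2 V, ∃ L : List G.edgeSet, e ∈ S →
      L.Nodup ∧ L.length ≤ k ∧ ∀ c : G.edgeSet → Fin k,
        (L.map c).Nodup → auxSat G k c e := by
    intro e
    induction e using Sym2.ind with
    | _ u v =>
      by_cases he : s(u, v) ∈ S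
      · obtain ⟨p, hp, hlen⟩ := hS u v he
        refine ⟨p.edges.pmap (fun e' he' => (⟨e', he'⟩ : G.edgeSet))
          (fun _ he' => p.edges_subset_edgeSet he'), fun _ => ⟨?_, ?_, ?_⟩⟩
        · exact (hp.edges_nodup).pmap (fun a ha b hb h => congrArg Subtype.val h)
        · rw [List.length_pmap, p.length_edges]; exact hlen
        · intro c hc
          refine ⟨u, v, rfl, p, hp, ?_⟩
          rwa [List.map_pmap] at hc
      · exact ⟨[], fun h => absurd h he⟩
  choose LL hLL using hchoice
  have hk0 : (0 : ℚ) < (k : ℚ) ^ k := by positivity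
  -- per-pair counting
  have key : ∀ e ∈ S, (k.factorial : ℚ) / (k : ℚ) ^ k * (k : ℚ) ^ m ≤
      ((Finset.univ.filter fun c : G.edgeSet → Fin k => auxSat G k c e).card : ℚ) := by
    intro e he
    obtain ⟨hnd, hlen, himp⟩ := hLL e he
    set L := LL e with hLdef
    set ℓ := L.length with hℓ
    have hℓm : ℓ ≤ m := hnd.length_le_card
    have hnat : k.factorial * k ^ m ≤ k.descFactorial ℓ * k ^ (m - ℓ) * k ^ k := by
      have e1 : k ^ m = k ^ ℓ * k ^ (m - ℓ) := by rw [← pow_add]; congr 1; omega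
      have e2 : k ^ k = k ^ (k - ℓ) * k ^ ℓ := by rw [← pow_add]; congr 1; omega
      rw [e1, e2, ← Nat.factorial_mul_descFactorial hlen]
      have h2 : (k - ℓ).factorial ≤ k ^ (k - ℓ) :=
        le_trans (Nat.factorial_le_pow _) (Nat.pow_le_pow_left (Nat.sub_le _ _) _)
      calc (k - ℓ).factorial * k.descFactorial ℓ * (k ^ ℓ * k ^ (m - ℓ))
          ≤ k ^ (k - ℓ) * k.descFactorial ℓ * (k ^ ℓ * k ^ (m - ℓ)) := by gcongr
        _ = k.descFactorial ℓ * k ^ (m - ℓ) * (k ^ (k - ℓ) * k ^ ℓ) := by ring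
    have hA : k.descFactorial ℓ * k ^ (m - ℓ) ≤
        (Finset.univ.filter fun c : G.edgeSet → Fin k => (L.map c).Nodup).card := by
      have := aux_count_rainbow k L hnd
      rwa [Fintype.card_subtype (p := fun c : G.edgeSet → Fin k => (L.map c).Nodup)] at this
    have hB : (Finset.univ.filter fun c : G.edgeSet → Fin k => (L.map c).Nodup).card ≤
        (Finset.univ.filter fun c : G.edgeSet → Fin k => auxSat G k c e).card := by
      apply Finset.card_le_card
      apply Finset.monotone_filter_right
      intro c _ hc
      exact himp c hc
    rw [div_mul_eq_mul_div, div_le_iff₀ hk0]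
    have h1 : ((k.factorial * k ^ m : ℕ) : ℚ) ≤
        ((k.descFactorial ℓ * k ^ (m - ℓ) * k ^ k : ℕ) : ℚ) := by exact_mod_cast hnat
    have h2 : ((k.descFactorial ℓ * k ^ (m - ℓ) : ℕ) : ℚ) ≤
        ((Finset.univ.filter fun c : G.edgeSet → Fin k => auxSat G k c e).card : ℚ) := by
      exact_mod_cast hA.trans hB
    push_cast at h1 h2 ⊢
    nlinarith [pow_pos hk0 1]
  -- averaging
  have hcardfun : ((Finset.univ : Finset (G.edgeSet → Fin k)).card : ℚ) = (k : ℚ) ^ m := by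
    rw [Finset.card_univ, Fintype.card_fun, Fintype.card_fin, hm]
    push_cast
    ring
  have hsum : ∑ c : G.edgeSet → Fin k, ((S.filter (auxSat G k c)).card : ℚ)
      = ∑ e ∈ S, ((Finset.univ.filter fun c : G.edgeSet → Fin k => auxSat G k c e).card : ℚ) := by
    simp_rw [Finset.card_filter]
    push_cast
    rw [Finset.sum_comm]
  have htotal : ∑ _c : G.edgeSet → Fin k, ((k.factorial : ℚ) / (k : ℚ) ^ k * S.card) ≤
      ∑ c : G.edgeSet → Fin k, ((S.filter (auxSat G k c)).card : ℚ) := by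
    rw [hsum, Finset.sum_const, nsmul_eq_mul, hcardfun]
    calc (k : ℚ) ^ m * ((k.factorial : ℚ) / (k : ℚ) ^ k * S.card)
        = ∑ _e ∈ S, ((k.factorial : ℚ) / (k : ℚ) ^ k * (k : ℚ) ^ m) := by
          rw [Finset.sum_const, nsmul_eq_mul]; ring
      _ ≤ _ := Finset.sum_le_sum key
  obtain ⟨c, -, hc⟩ := Finset.exists_le_of_sum_le Finset.univ_nonempty htotal
  refine ⟨c, ?_⟩
  have hcard : Nat.card {e : Sym2 V // e ∈ S ∧ auxSat G k c e} =
      (S.filter (auxSat G k c)).card := by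
    rw [Nat.card_eq_fintype_card, Fintype.card_subtype]
    congr 1
    ext e
    simp [and_comm]
  show ((Nat.factorial k : ℚ) / (k : ℚ) ^ k) * S.card ≤
    (Nat.card {e : Sym2 V // e ∈ S ∧ auxSat G k c e} : ℚ)
  rw [hcard]
  exact hc
end

section
/- Let k ≥ 3 and consider a graph containing disjoint 'pendant' gadgets: for each vertex v of a base graph G, new vertices v₁¹, v₁², v₂, ..., v_{k−1} with edges v v₁¹, v v₁², v₁¹ v₂, v₁² v₂, v₂ v₃, ..., v_{k−2} v_{k−1}, pre-colored so that c(v v₁¹)=1, c(v v₁²)=2, c(v₁¹ v₂)=c(v₁² v₂)=3, and c(v_i v_{i+1})=i+2 for 2 ≤ i ≤ k−2. Then for any edge uv of G with u < v in some fixed order, every path of length at most k from u_{k−1} to v in the augmented graph is one of the two paths v u u₁¹ u₂ u₃ ⋯ u_{k−1} or v u u₁² u₂ u₃ ⋯ u_{k−1}; consequently, in any k-edge-coloring extending the gadget pre-coloring in which u_{k−1} and v are joined by a rainbow path, the edge uv receives color 1 or color 2. -/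
open Sum

/-- The attachment relation for the pendant gadgets of Lemma 2: for each base vertex
`v` the gadget vertices are encoded as `inr (v, i) : V ⊕ V × Fin k`, with
`(v, 0) = v₁¹`, `(v, 1) = v₁²` and `(v, i) = v_i` for `2 ≤ i ≤ k − 1`.  The gadget
edges are `v v₁¹, v v₁², v₁¹ v₂, v₁² v₂, v₂ v₃, …, v_{k−2} v_{k−1}`. -/
def gadgetRel {V : Type*} (G : SimpleGraph V) (k : ℕ) :
    V ⊕ V × Fin k → V ⊕ V × Fin k → Prop := fun a b =>
  match a, b with
  | inl u, inl v => G.Adj u v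
  | inl v, inr (w, i) => v = w ∧ (i.val = 0 ∨ i.val = 1)
  | inr (w, i), inr (w', j) =>
      w = w' ∧ ((i.val ≤ 1 ∧ j.val = 2) ∨ (2 ≤ i.val ∧ j.val = i.val + 1))
  | _, _ => False

/-- The augmented graph `G'` obtained from `G` by attaching a pendant gadget at
every vertex. -/
def gadgetGraph {V : Type*} (G : SimpleGraph V) (k : ℕ) :
    SimpleGraph (V ⊕ V × Fin k) :=
  SimpleGraph.fromRel (gadgetRel G k)

def phiF {V : Type*} (k : ℕ) : V ⊕ V × Fin k → ℕ
  | inl _ => 0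
  | inr (_, i) => max i.val 1

lemma adj_phi {V : Type*} {G : SimpleGraph V} {k : ℕ} {a b : V ⊕ V × Fin k}
    (h : (gadgetGraph G k).Adj a b) : phiF k a ≤ phiF k b + 1 := by
  rw [gadgetGraph, SimpleGraph.fromRel_adj] at h
  obtain ⟨-, h | h⟩ := h <;>
    rcases a with x | ⟨w, i⟩ <;> rcases b with y | ⟨w', j⟩ <;>
    simp_all [gadgetRel, phiF] <;> omega

lemma walk_phi {V : Type*} {G : SimpleGraph V} {k : ℕ} :
    ∀ {a b : V ⊕ V × Fin k} (p : (gadgetGraph G k).Walk a b),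
      phiF k a ≤ phiF k b + p.length := by
  intro a b p
  induction p with
  | nil => simp
  | cons h q ih =>
    have := adj_phi h
    simp only [SimpleGraph.Walk.length_cons]
    omega

lemma adj_inr {V : Type*} {G : SimpleGraph V} {k : ℕ} {w : V} {i : Fin k}
    {b : V ⊕ V × Fin k} (h : (gadgetGraph G k).Adj (inr (w, i)) b) :
    (b = inl w ∧ i.val ≤ 1) ∨
    ∃ j : Fin k, b = inr (w, j) ∧
      (i.val ≤ 1 ∧ j.val = 2 ∨ j.val ≤ 1 ∧ i.val = 2 ∨
       2 ≤ i.val ∧ j.val = i.val + 1 ∨ 2 ≤ j.val ∧ i.val = j.val + 1) := by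
  rw [gadgetGraph, SimpleGraph.fromRel_adj] at h
  obtain ⟨hne, h | h⟩ := h
  · rcases b with y | ⟨w', j⟩
    · simp [gadgetRel] at h
    · simp only [gadgetRel] at h
      obtain ⟨rfl, h⟩ := h
      exact Or.inr ⟨j, rfl, by omega⟩
  · rcases b with y | ⟨w', j⟩
    · simp only [gadgetRel] at h
      exact Or.inl ⟨by rw [h.1], by omega⟩
    · simp only [gadgetRel] at h
      obtain ⟨rfl, h⟩ := h
      exact Or.inr ⟨j, rfl, by omega⟩

def gvert {V : Type*} (k : ℕ) (hk : 0 < k) (u : V) (n : ℕ) : V ⊕ V × Fin k :=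
  inr (u, ⟨n % k, Nat.mod_lt _ hk⟩)

def vchain {V : Type*} (k : ℕ) (hk : 0 < k) (u : V) : ℕ → List (V ⊕ V × Fin k)
  | 0 => []
  | n + 1 => vchain k hk u n ++ [gvert k hk u (n + 2)]

def echain {V : Type*} (k : ℕ) (hk : 0 < k) (u : V) : ℕ → List (Sym2 (V ⊕ V × Fin k))
  | 0 => []
  | n + 1 => echain k hk u n ++ [s(gvert k hk u (n + 2), gvert k hk u (n + 3))]

lemma gvert_eq {V : Type*} {k : ℕ} (hk : 0 < k) (u : V) {n : ℕ} (hn : n < k)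
    (x : Fin k) (hx : x.val = n) : gvert k hk u n = inr (u, x) := by
  simp only [gvert]
  congr 1
  exact congrArg _ (Fin.ext (by simp [Nat.mod_eq_of_lt hn, hx]))

lemma key {V : Type*} {G : SimpleGraph V} {k : ℕ} (hk : 3 ≤ k) (hk0 : 0 < k)
    (u v : V) (hne : u ≠ v) :
    ∀ m : ℕ, m + 2 ≤ k - 1 → ∀ x : Fin k, x.val = m + 2 →
    ∀ r : (gadgetGraph G k).Walk (inr (u, x)) (inl v), r.IsPath → r.length ≤ m + 3 →
    ∃ a : Fin k, a.val ≤ 1 ∧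
      r.support.reverse = inl v :: inl u :: inr (u, a) :: vchain k hk0 u (m + 1) ∧
      r.edges.reverse = s(inl v, inl u) :: s(inl u, inr (u, a)) ::
        s(inr (u, a), gvert k hk0 u 2) :: echain k hk0 u m := by
  intro m
  induction m with
  | zero =>
    intro hm x hx r hr hlen
    cases r with
    | cons h1 r1 =>
      rename_i b1
      rcases adj_inr h1 with ⟨-, hle⟩ | ⟨j, rfl, hj⟩
      · omega
      · rcases hj with hj | hj | hj | hj
        · omega
        · -- j.val ≤ 1
          cases r1 with
          | cons h2 r2 =>
            rename_i b2
            rcases adj_inr h2 with ⟨rfl, -⟩ | ⟨j2, rfl, hj2⟩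
            · -- b2 = inl u
              cases r2 with
              | nil => exact absurd rfl hne
              | cons h3 r3 =>
                rename_i b3
                cases r3 with
                | nil =>
                  refine ⟨j, by omega, ?_, ?_⟩
                  · simp [SimpleGraph.Walk.support_cons, vchain,
                      gvert_eq hk0 u (show (2:ℕ) < k by omega) x (by omega)]
                  · simp [SimpleGraph.Walk.edges_cons, echain,
                      gvert_eq hk0 u (show (2:ℕ) < k by omega) x (by omega),
                      Sym2.eq_swap]
                | cons h4 r4 => simp [SimpleGraph.Walk.length_cons] at hlen; omega
            · -- b2 = inr (u, j2)
              exfalso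
              have hj2v : j2.val = 2 := by omega
              have hxj : j2 = x := Fin.ext (by omega)
              have hmem : inr (u, x) ∈ r2.support := by
                rw [← hxj]; exact r2.start_mem_support
              rw [SimpleGraph.Walk.cons_isPath_iff] at hr
              exact hr.2 (by simp [SimpleGraph.Walk.support_cons, hmem])
        · -- j.val = x.val + 1 = 3 : too far
          exfalso
          have := walk_phi r1
          simp [phiF] at this
          simp [SimpleGraph.Walk.length_cons] at hlen
          omega
        · omega
  | succ m ih =>
    intro hm x hx r hr hlen
    cases r with
    | cons h1 r1 =>
      rename_i b1
      rcases adj_inr h1 with ⟨-, hle⟩ | ⟨j, rfl, hj⟩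
      · omega
      · rcases hj with hj | hj | hj | hj
        · omega
        · omega
        · -- ascend: impossible by phi
          exfalso
          have := walk_phi r1
          simp [phiF] at this
          simp [SimpleGraph.Walk.length_cons] at hlen
          omega
        · -- descend : j.val = m + 2
          have hr1 : r1.IsPath := ((SimpleGraph.Walk.cons_isPath_iff _ _).1 hr).1
          simp only [SimpleGraph.Walk.length_cons] at hlen
          obtain ⟨a, ha, hsup, hedg⟩ := ih (by omega) j (by omega) r1 hr1 (by omega)
          refine ⟨a, ha, ?_, ?_⟩
          · rw [SimpleGraph.Walk.support_cons, List.reverse_cons, hsup]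
            simp [vchain, gvert_eq hk0 u (show m + 3 < k by omega) x (by omega)]
          · rw [SimpleGraph.Walk.edges_cons, List.reverse_cons, hedg]
            simp [echain, gvert_eq hk0 u (show m + 3 < k by omega) x (by omega),
              gvert_eq hk0 u (show m + 2 < k by omega) j (by omega), Sym2.eq_swap]

lemma vchain_length {V : Type*} (k : ℕ) (hk : 0 < k) (u : V) (n : ℕ) :
    (vchain k hk u n).length = n := by
  induction n with
  | zero => rfl
  | succ n ih => simp [vchain, ih]

lemma vchain_getElem {V : Type*} (k : ℕ) (hk : 0 < k) (u : V) (n i : ℕ)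
    (h : i < (vchain k hk u n).length) :
    (vchain k hk u n)[i] = gvert k hk u (i + 2) := by
  induction n with
  | zero => simp [vchain] at h
  | succ n ih =>
    rw [vchain_length] at h
    by_cases hi : i < n
    · show (vchain k hk u n ++ [gvert k hk u (n+2)])[i]'(by simpa [vchain_length] using by omega)
        = gvert k hk u (i + 2)
      rw [List.getElem_append_left (by rw [vchain_length]; exact hi)]
      exact ih _
    · have hin : i = n := by omega
      subst hin
      show (vchain k hk u i ++ [gvert k hk u (i+2)])[i]'(by simp [vchain_length]) = _
      rw [List.getElem_append_right (by rw [vchain_length])]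
      simp [vchain_length]

lemma vchain_eq_ofFn {V : Type*} {k : ℕ} (hk : 3 ≤ k) (hk0 : 0 < k) (u : V) :
    vchain k hk0 u (k - 2) = List.ofFn (fun i : Fin (k - 2) =>
      (inr (u, ⟨i.val + 2, (by have := i.isLt; omega : i.val + 2 + 0 < k)⟩) : V ⊕ V × Fin k)) := by
  apply List.ext_getElem
  · simp [vchain_length]
  · intro i h1 h2
    rw [List.getElem_ofFn, vchain_getElem]
    rw [vchain_length] at h1
    exact gvert_eq hk0 u (by omega) _ rfl

lemma mem_echain {V : Type*} {k : ℕ} (hk : 3 ≤ k) (hk0 : 0 < k) (u : V)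
    (c : Sym2 (V ⊕ V × Fin k) → Fin k)
    (h5 : ∀ (w : V) (i : ℕ) (h2 : 2 ≤ i) (hik : i + 1 ≤ k - 1),
      c s(inr (w, ⟨i, (by omega : i + 0 < k)⟩), inr (w, ⟨i + 1, (by omega : i + 1 + 0 < k)⟩))
        = ⟨i + 1, (by omega : i + 1 + 0 < k)⟩) :
    ∀ n : ℕ, n + 2 ≤ k - 1 → ∀ j : ℕ, 3 ≤ j → j ≤ n + 2 → ∀ (hjk : j < k),
      (⟨j, hjk⟩ : Fin k) ∈ (echain k hk0 u n).map c := by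
  intro n
  induction n with
  | zero => omega
  | succ n ih =>
    intro hn j h3 hj hjk
    rw [show echain k hk0 u (n+1)
        = echain k hk0 u n ++ [s(gvert k hk0 u (n+2), gvert k hk0 u (n+3))] from rfl,
      List.map_append, List.mem_append]
    by_cases hcase : j = n + 3
    · right
      subst hcase
      rw [gvert_eq hk0 u (show n + 2 < k by omega) ⟨n+2, by omega⟩ rfl,
        gvert_eq hk0 u (show n + 3 < k by omega) ⟨n+3, by omega⟩ rfl]
      simp only [List.map_cons, List.map_nil, List.mem_singleton]
      rw [h5 u (n+2) (by omega) (by omega)]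
    · left
      exact ih (by omega) j h3 (by omega) hjk
/-- let `k ≥ 3`, let `uv ∈ E(G)` with `u < v`.  In the augmented graph,
(1) every path of length at most `k` from `v` to `u_{k−1}` is one of the two paths
`v u u₁¹ u₂ ⋯ u_{k−1}` and `v u u₁² u₂ ⋯ u_{k−1}`, and
(2) for every `k`-edge-coloring (colors `Fin k`, color `j` of the paper being index
`j − 1`) extending the gadget pre-coloring `c(w w₁¹)=1, c(w w₁²)=2,
c(w₁¹ w₂)=c(w₁² w₂)=3, c(w_i w_{i+1})=i+2 (2 ≤ i ≤ k−2)`, if `u_{k−1}` and `v` are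
joined by a rainbow path then the edge `uv` gets color `1` or color `2`. -/
theorem stmt_16 {V : Type*} [LinearOrder V] (k : ℕ) (hk : 3 ≤ k)
    (G : SimpleGraph V) (u v : V) (huv : G.Adj u v) (hlt : u < v) :
    (∀ p : (gadgetGraph G k).Walk (inl v) (inr (u, ⟨k - 1, by omega⟩)),
        p.IsPath → p.length ≤ k →
        p.support =
          inl v :: inl u :: inr (u, ⟨0, by omega⟩) ::
            List.ofFn (fun i : Fin (k - 2) =>
              inr (u, ⟨i.val + 2, by have := i.isLt; omega⟩)) ∨
        p.support =
          inl v :: inl u :: inr (u, ⟨1, by omega⟩) ::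
            List.ofFn (fun i : Fin (k - 2) =>
              inr (u, ⟨i.val + 2, by have := i.isLt; omega⟩))) ∧
    (∀ c : Sym2 (V ⊕ V × Fin k) → Fin k,
        (∀ w : V, c s(inl w, inr (w, ⟨0, by omega⟩)) = ⟨0, by omega⟩) →
        (∀ w : V, c s(inl w, inr (w, ⟨1, by omega⟩)) = ⟨1, by omega⟩) →
        (∀ w : V, c s(inr (w, ⟨0, by omega⟩), inr (w, ⟨2, by omega⟩)) = ⟨2, by omega⟩) →
        (∀ w : V, c s(inr (w, ⟨1, by omega⟩), inr (w, ⟨2, by omega⟩)) = ⟨2, by omega⟩) →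
        (∀ (w : V) (i : ℕ) (h2 : 2 ≤ i) (hik : i + 1 ≤ k - 1),
          c s(inr (w, ⟨i, by omega⟩), inr (w, ⟨i + 1, by omega⟩)) = ⟨i + 1, by omega⟩) →
        (∃ p : (gadgetGraph G k).Walk (inl v) (inr (u, ⟨k - 1, by omega⟩)),
          p.IsPath ∧ (p.edges.map c).Nodup) →
        (c s(inl u, inl v) = ⟨0, by omega⟩ ∨ c s(inl u, inl v) = ⟨1, by omega⟩)) := by
  have hk0 : 0 < k := by omega
  have hne : u ≠ v := ne_of_lt hlt
  constructor
  · intro p hp hl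
    obtain ⟨a, ha, hsup, -⟩ := key hk hk0 u v hne (k - 3) (by omega)
      ⟨k - 1, by omega⟩ (by simp; omega) p.reverse hp.reverse
      (by rw [SimpleGraph.Walk.length_reverse]; omega)
    rw [SimpleGraph.Walk.support_reverse, List.reverse_reverse] at hsup
    rw [show k - 3 + 1 = k - 2 from by omega, vchain_eq_ofFn hk hk0 u] at hsup
    rcases Nat.le_one_iff_eq_zero_or_eq_one.mp ha with h | h
    · left; rw [hsup, show a = ⟨0, by omega⟩ from Fin.ext h]
    · right; rw [hsup, show a = ⟨1, by omega⟩ from Fin.ext h]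
  · rintro c h0c h1c h2a h2b h5 ⟨p, hp, hrain⟩
    have hlen : p.length ≤ k := by
      have := hrain.length_le_card
      simpa using this
    obtain ⟨a, ha, -, hedg⟩ := key hk hk0 u v hne (k - 3) (by omega)
      ⟨k - 1, by omega⟩ (by simp; omega) p.reverse hp.reverse
      (by rw [SimpleGraph.Walk.length_reverse]; omega)
    rw [SimpleGraph.Walk.edges_reverse, List.reverse_reverse] at hedg
    rw [hedg] at hrain
    simp only [List.map_cons, List.nodup_cons] at hrain
    rw [show s(inl u, inl v) = s((inl v : V ⊕ V × Fin k), inl u) from Sym2.eq_swap]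
    set t := c s((inl v : V ⊕ V × Fin k), inl u) with ht
    have hnotmem := hrain.1
    have h2col : c s(inr (u, a), gvert k hk0 u 2) = ⟨2, by omega⟩ := by
      rcases Nat.le_one_iff_eq_zero_or_eq_one.mp ha with h | h
      · rw [show a = ⟨0, by omega⟩ from Fin.ext h,
          gvert_eq hk0 u (show 2 < k by omega) ⟨2, by omega⟩ rfl]
        exact h2a u
      · rw [show a = ⟨1, by omega⟩ from Fin.ext h,
          gvert_eq hk0 u (show 2 < k by omega) ⟨2, by omega⟩ rfl]
        exact h2b u
    have htv : t.val ≤ 1 := by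
      by_contra hcon
      push_neg at hcon
      rcases eq_or_lt_of_le (show 2 ≤ t.val by omega) with h2t | h3t
      · apply hnotmem
        have : t = c s(inr (u, a), gvert k hk0 u 2) := by
          rw [h2col]; exact Fin.ext (by simp; omega)
        rw [this]
        simp
      · apply hnotmem
        have htlt := t.isLt
        have hmem := mem_echain hk hk0 u c h5 (k - 3) (by omega) t.val
          (by omega) (by omega) t.isLt
        have : (⟨t.val, t.isLt⟩ : Fin k) = t := Fin.ext rfl
        rw [this] at hmem
        simp [hmem]
    rcases Nat.le_one_iff_eq_zero_or_eq_one.mp htv with h | h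
    · left; exact Fin.ext h
    · right; exact Fin.ext h
end
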